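/- In the semidirect product G = F ⋊_φ Q8 as above (a model of P_3(RP²)), the unique element of order 2 is (1, z) where z is the unique involution of Q8, and every element of G of order 4 squares to (1, z). -/

import Mathlib

namespace Stmt14Aux

open FreeGroup

variable {α : Type*} [DecidableEq α]

/-- The "no cancellation" relation on letters. -/
def R : (α × Bool) → (α × Bool) → Prop := fun p q => ¬(p.1 = q.1 ∧ p.2 = !q.2)

lemma chain'_reduce (L : List (α × Bool)) : List.Chain' R (reduce L) := by
  induction L with
  | nil => simp [List.Chain']
  | cons x L ih =>
    rw [reduce.cons]
    cases h : reduce L with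
    | nil => simp [List.Chain']
    | cons hd tl =>
      rw [h] at ih
      dsimp only
      split_ifs with hc
      · exact ih.tail
      · exact List.isChain_cons_cons.mpr ⟨hc, ih⟩

lemma no_step {L M : List (α × Bool)} (h : List.Chain' R L) (s : Red.Step L M) : False := by
  cases s with
  | @not L₁ L₂ x b =>
    have h2 : List.Chain' R ((x, b) :: (x, !b) :: L₂) := (List.isChain_append.mp h).2.1
    exact (List.isChain_cons_cons.mp h2).1 ⟨rfl, by simp⟩

lemma red_eq_of_chain' {L M : List (α × Bool)} (h : List.Chain' R L) (r : Red L M) : L = M := by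
  rcases Relation.ReflTransGen.cases_head r with rfl | ⟨c, hc, -⟩
  · rfl
  · exact (no_step h hc).elim

lemma sq_eq_one {w : FreeGroup α} (h : w * w = 1) : w = 1 := by
  suffices H : ∀ n (w : FreeGroup α), norm w ≤ n → w * w = 1 → w = 1 from
    H (norm w) w le_rfl h
  intro n
  induction n with
  | zero => exact fun w hw _ => norm_eq_zero.mp (Nat.le_zero.mp hw)
  | succ n ih =>
    intro w hw h
    cases hL : toWord w with
    | nil => exact toWord_eq_nil_iff.mp hL
    | cons p L' =>
      by_cases hcyc : R ((p :: L').getLast (by simp)) p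
      · -- cyclically reduced case: w * w has reduced word `toWord w ++ toWord w`
        have hch : List.Chain' R (toWord w) := by
          rw [← reduce_toWord w]; exact chain'_reduce _
        have hch2 : List.Chain' R (toWord w ++ toWord w) := by
          apply List.isChain_append.mpr
          refine ⟨hch, hch, ?_⟩
          intro x hx y hy
          rw [hL] at hx hy
          rw [List.getLast?_eq_getLast (by simp)] at hx
          simp only [Option.mem_def, Option.some.injEq, List.head?_cons] at hx hy
          rw [← hx, ← hy]
          exact hcyc
        have hred : Red (toWord w ++ toWord w) (reduce (toWord w ++ toWord w)) := reduce.red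
        have heq : toWord w ++ toWord w = reduce (toWord w ++ toWord w) :=
          red_eq_of_chain' hch2 hred
        have h1 : mk (toWord w ++ toWord w) = 1 := by
          rw [← mul_mk, mk_toWord]; exact h
        have h2 : reduce (toWord w ++ toWord w) = [] := by
          have := congrArg toWord h1
          rwa [toWord_mk, toWord_one] at this
        rw [h2] at heq
        rcases List.append_eq_nil_iff.mp heq with h3
        rw [hL] at h3; cases h3.1
      · -- conjugation case
        have hne : p.2 ≠ !p.2 := by cases p.2 <;> simp
        have hc' := not_not.mp hcyc
        have hL'ne : L' ≠ [] := by
          rintro rfl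
          simp only [List.getLast_singleton] at hc'
          exact hne hc'.2
        have hqlast : (p :: L').getLast (by simp) = L'.getLast hL'ne :=
          List.getLast_cons hL'ne
        have hq : L'.getLast hL'ne = (p.1, !p.2) := by
          rw [← hqlast]; exact Prod.ext hc'.1 hc'.2
        have hdecomp : L' = L'.dropLast ++ [(p.1, !p.2)] := by
          conv_lhs => rw [← List.dropLast_append_getLast hL'ne]
          rw [hq]
        set u : FreeGroup α := mk [p] with hu_def
        have hu : mk [(p.1, !p.2)] = u⁻¹ := by
          rw [hu_def, inv_mk]
          congr 1
        have hw' : w = u * mk L'.dropLast * u⁻¹ := by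
          conv_lhs => rw [← mk_toWord (x := w), hL, hdecomp]
          rw [show p :: (L'.dropLast ++ [(p.1, !p.2)]) =
              [p] ++ L'.dropLast ++ [(p.1, !p.2)] by simp, ← mul_mk, ← mul_mk, hu]
        set m := mk L'.dropLast with hm_def
        have e : m = u⁻¹ * w * u := by rw [hw']; group
        have hm : m * m = 1 := by
          rw [e]
          calc (u⁻¹ * w * u) * (u⁻¹ * w * u) = u⁻¹ * (w * w) * u := by group
            _ = 1 := by rw [h]; group
        have hnorm : norm m ≤ n := by
          have h1 : norm m ≤ L'.dropLast.length := norm_mk_le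
          have h2 : norm w = (p :: L').length := by
            rw [show norm w = w.toWord.length from rfl, hL]
          have h3 : L'.dropLast.length = L'.length - 1 := List.length_dropLast
          have h4 : L'.length ≥ 1 := List.length_pos_iff_ne_nil.mpr hL'ne
          simp only [List.length_cons] at h2
          omega
        have hm1 : m = 1 := ih m hnorm hm
        rw [hw', hm1, mul_one, mul_inv_cancel]

end Stmt14Aux

/-- In `G = F ⋊_φ Q8` as in the paper, the unique element of order 2 is `(1, z)`
where `z = i²` is the unique involution of `Q8`, and every element of order 4
squares to `(1, z)`. -/
theorem stmt_14 (φ : QuaternionGroup 2 →* MulAut (FreeGroup (Fin 2)))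
    (hix : φ (QuaternionGroup.a 1) (FreeGroup.of 0) = FreeGroup.of 1)
    (hiy : φ (QuaternionGroup.a 1) (FreeGroup.of 1) = FreeGroup.of 0)
    (hjx : φ (QuaternionGroup.xa 0) (FreeGroup.of 0) = (FreeGroup.of 1)⁻¹)
    (hjy : φ (QuaternionGroup.xa 0) (FreeGroup.of 1) = (FreeGroup.of 0)⁻¹) :
    (∀ g : FreeGroup (Fin 2) ⋊[φ] QuaternionGroup 2,
      orderOf g = 2 ↔ g = SemidirectProduct.inr ((QuaternionGroup.a 1) ^ 2)) ∧
    (∀ g : FreeGroup (Fin 2) ⋊[φ] QuaternionGroup 2,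
      orderOf g = 4 → g ^ 2 = SemidirectProduct.inr ((QuaternionGroup.a 1) ^ 2)) := by
  have q8sq : ∀ q : QuaternionGroup 2, q * q = 1 ↔
      (q = 1 ∨ q = QuaternionGroup.a 1 ^ 2) := by decide
  have hφz : ∀ v : FreeGroup (Fin 2),
      φ (QuaternionGroup.a 1 ^ 2) v = v := by
    have hmul : φ (QuaternionGroup.a 1 ^ 2)
        = φ (QuaternionGroup.a 1) * φ (QuaternionGroup.a 1) := by
      rw [pow_two, map_mul]
    have hgen : ∀ a : Fin 2,
        (φ (QuaternionGroup.a 1 ^ 2)).toMonoidHom (FreeGroup.of a)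
          = (MonoidHom.id _) (FreeGroup.of a) := by
      intro a
      show φ (QuaternionGroup.a 1 ^ 2) (FreeGroup.of a) = FreeGroup.of a
      rw [hmul, MulAut.mul_apply]
      fin_cases a
      · show φ (QuaternionGroup.a 1) (φ (QuaternionGroup.a 1) (FreeGroup.of 0)) = FreeGroup.of 0
        rw [hix, hiy]
      · show φ (QuaternionGroup.a 1) (φ (QuaternionGroup.a 1) (FreeGroup.of 1)) = FreeGroup.of 1
        rw [hiy, hix]
    have hh := FreeGroup.ext_hom _ _ hgen
    intro v
    exact DFunLike.congr_fun hh v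
  have key : ∀ g : FreeGroup (Fin 2) ⋊[φ] QuaternionGroup 2, g * g = 1 →
      g = 1 ∨ g = SemidirectProduct.inr (QuaternionGroup.a 1 ^ 2) := by
    intro g hg
    have hq : g.right * g.right = 1 := by
      have := congrArg SemidirectProduct.right hg; simpa using this
    have hwspec : g.left * φ g.right g.left = 1 := by
      have := congrArg SemidirectProduct.left hg; simpa using this
    rcases (q8sq g.right).mp hq with h | h
    · left
      rw [h] at hwspec
      simp only [map_one, MulAut.one_apply] at hwspec
      have hl := Stmt14Aux.sq_eq_one hwspec
      ext
      · simp [hl]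
      · simp [h]
    · right
      rw [h, hφz] at hwspec
      have hl := Stmt14Aux.sq_eq_one hwspec
      ext
      · simp [hl]
      · simp [h]
  haveI : Fact (Nat.Prime 2) := ⟨Nat.prime_two⟩
  constructor
  · intro g
    constructor
    · intro h2
      have hgg : g * g = 1 := by
        have := pow_orderOf_eq_one g
        rwa [h2, pow_two] at this
      rcases key g hgg with rfl | rfl
      · rw [orderOf_one] at h2; exact absurd h2 (by norm_num)
      · rfl
    · rintro rfl
      refine orderOf_eq_prime ?_ ?_
      · rw [← map_pow, show (QuaternionGroup.a 1 ^ 2 : QuaternionGroup 2) ^ 2 = 1 by decide,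
          map_one]
      · intro hcon
        have h1 : (QuaternionGroup.a 1 ^ 2 : QuaternionGroup 2) = 1 :=
          SemidirectProduct.inr_injective (by rw [hcon, map_one])
        exact absurd h1 (by decide)
  · intro g h4
    have hg4 : g ^ 2 * g ^ 2 = 1 := by
      have := pow_orderOf_eq_one g
      rw [h4] at this
      rw [← pow_add]
      simpa using this
    rcases key _ hg4 with h | h
    · exfalso
      have hd : orderOf g ∣ 2 := orderOf_dvd_of_pow_eq_one h
      rw [h4] at hd
      exact absurd (Nat.le_of_dvd (by norm_num) hd) (by norm_num)
    · exact h
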